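/- Let π : [0,L] → ℝ^d be a continuous curve parametrized by arc length (i.e., 1-Lipschitz) with π(0) = 0 and ‖π(L)‖ = r, where r ≥ 20ρ and ρ > 0. Set k = ⌈r/(20ρ)⌉. Then there exists a sequence 0 = t(0) ≤ t(1) ≤ ⋯ ≤ t(k) ≤ L such that (1) for any distinct j, j' ∈ {0,…,k}, ‖π(t(j)) − π(t(j'))‖ ≥ 10ρ, and (2) for any j ∈ {1,…,k}, ‖π(t(j)) − π(t(j−1))‖ ≤ 10ρ. -/
import Mathlib


open Set

/-- Helper: if `f` is continuous within `Icc 0 L` at `b`, `b < L`, and `f b < c`, then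
there is a point strictly to the right of `b` in `(b, L]` where `f < c`. -/
theorem right_pt_aux {L b c : ℝ} {f : ℝ → ℝ} (hb0 : 0 ≤ b) (hbL : b < L)
    (hf : ContinuousWithinAt f (Icc 0 L) b) (hfb : f b < c) :
    ∃ s, s ∈ Ioc b L ∧ f s < c := by
  have hmem : {s | f s < c} ∈ nhdsWithin b (Icc 0 L) := hf (Iio_mem_nhds hfb)
  have hsub : Ioc b L ⊆ Icc 0 L := fun s hs => ⟨hb0.trans hs.1.le, hs.2⟩
  have hmem2 : {s | f s < c} ∈ nhdsWithin b (Ioc b L) := nhdsWithin_mono b hsub hmem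
  have hne : (nhdsWithin b (Ioc b L)).NeBot := by
    rw [← mem_closure_iff_nhdsWithin_neBot, closure_Ioc hbL.ne]
    exact ⟨le_rfl, hbL.le⟩
  have hev : ∀ᶠ s in nhdsWithin b (Ioc b L), f s < c := hmem2
  obtain ⟨s, hs1, hs2⟩ := (hev.and eventually_mem_nhdsWithin).exists
  exact ⟨s, hs2, hs1⟩

/-- The skeleton lemma: from a continuous curve `π : [0,L] → ℝ^d` with `π 0 = 0` and
`‖π L‖ = r`, `r ≥ 20ρ`, one can extract `k+1 = ⌈r/(20ρ)⌉+1` points along the curve that are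
pairwise `10ρ`-separated, with consecutive points at distance at most `10ρ`. -/
theorem skeleton_lemma {d : ℕ} (ρ r L : ℝ) (hρ : 0 < ρ) (hr : 20 * ρ ≤ r) (hL : 0 ≤ L)
    (π : ℝ → EuclideanSpace ℝ (Fin d))
    (hcont : ContinuousOn π (Icc 0 L))
    (h0 : π 0 = 0) (hend : ‖π L‖ = r) :
    ∃ t : ℕ → ℝ,
      t 0 = 0 ∧
      (∀ j, j < ⌈r / (20 * ρ)⌉₊ → t j ≤ t (j + 1)) ∧
      (∀ j, j ≤ ⌈r / (20 * ρ)⌉₊ → t j ∈ Icc 0 L) ∧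
      (∀ j j', j ≤ ⌈r / (20 * ρ)⌉₊ → j' ≤ ⌈r / (20 * ρ)⌉₊ → j ≠ j' →
        10 * ρ ≤ ‖π (t j) - π (t j')‖) ∧
      (∀ j, 1 ≤ j → j ≤ ⌈r / (20 * ρ)⌉₊ → ‖π (t j) - π (t (j - 1))‖ ≤ 10 * ρ) := by
  set k := ⌈r / (20 * ρ)⌉₊ with hk
  have hρ10 : (0:ℝ) < 10 * ρ := by positivity
  have hr0 : 0 < r := lt_of_lt_of_le (by positivity) hr
  have hkr : 10 * ρ * k ≤ r := by
    have hx : (0:ℝ) ≤ r / (20 * ρ) := by positivity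
    have h1 : (k:ℝ) < r / (20 * ρ) + 1 := by
      rw [hk]; exact_mod_cast Nat.ceil_lt_add_one hx
    have h2 : 10 * ρ * (r / (20 * ρ)) = r / 2 := by field_simp; ring
    nlinarith
  set T : ℝ → ℝ := fun a => sSup {s | s ∈ Icc a L ∧ ‖π s - π a‖ ≤ 10 * ρ} with hT
  set t : ℕ → ℝ := fun n => T^[n] 0 with ht
  have ht0 : t 0 = 0 := rfl
  have htsucc : ∀ n, t (n + 1) = T (t n) := fun n => Function.iterate_succ_apply' T n 0
  have hbdd : ∀ a : ℝ, BddAbove {s | s ∈ Icc a L ∧ ‖π s - π a‖ ≤ 10 * ρ} :=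
    fun a => ⟨L, fun s hs => hs.1.2⟩
  have hTmem : ∀ a, a ∈ Icc 0 L → T a ∈ {s | s ∈ Icc a L ∧ ‖π s - π a‖ ≤ 10 * ρ} := by
    intro a ha
    apply IsClosed.csSup_mem
    · have hfc : ContinuousOn (fun s => ‖π s - π a‖) (Icc a L) :=
        ((hcont.mono (Icc_subset_Icc ha.1 le_rfl)).sub continuousOn_const).norm
      have heq : {s | s ∈ Icc a L ∧ ‖π s - π a‖ ≤ 10 * ρ}
          = Icc a L ∩ (fun s => ‖π s - π a‖) ⁻¹' Iic (10 * ρ) := rfl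
      rw [heq]
      exact hfc.preimage_isClosed_of_isClosed isClosed_Icc isClosed_Iic
    · exact ⟨a, ⟨le_rfl, ha.2⟩, by simp [hρ10.le]⟩
    · exact hbdd a
  have hle : ∀ a, ∀ s, s ∈ Icc a L → ‖π s - π a‖ ≤ 10 * ρ → s ≤ T a :=
    fun a s hs hns => le_csSup (hbdd a) ⟨hs, hns⟩
  have hrec : ∀ n, t n ∈ Icc 0 L ∧ ‖π (t n)‖ ≤ 10 * ρ * n := by
    intro n
    induction n with
    | zero =>
      refine ⟨?_, ?_⟩
      · rw [ht0]; exact ⟨le_rfl, hL⟩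
      · rw [ht0, h0]; simp
    | succ n ih =>
      have hm := hTmem (t n) ih.1
      rw [← htsucc n] at hm
      refine ⟨⟨ih.1.1.trans hm.1.1, hm.1.2⟩, ?_⟩
      have h3 : ‖π (t (n+1))‖ ≤ ‖π (t (n+1)) - π (t n)‖ + ‖π (t n)‖ := by
        simpa using norm_add_le (π (t (n+1)) - π (t n)) (π (t n))
      push_cast
      nlinarith [hm.2, ih.2]
  have hstep : ∀ n, ‖π (t (n+1)) - π (t n)‖ ≤ 10 * ρ := by
    intro n
    have hm := hTmem (t n) (hrec n).1
    rw [← htsucc n] at hm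
    exact hm.2
  have hmono1 : ∀ n, t n ≤ t (n+1) := by
    intro n
    have hm := hTmem (t n) (hrec n).1
    rw [← htsucc n] at hm
    exact hm.1.1
  have hmono : ∀ i j, i ≤ j → t i ≤ t j := fun i j hij =>
    monotone_nat_of_le_succ hmono1 hij
  have hltL : ∀ n, n < k → t n < L := by
    intro n hn
    have h1 : ‖π (t n)‖ ≤ 10 * ρ * n := (hrec n).2
    have hn' : (n:ℝ) + 1 ≤ (k:ℝ) := by exact_mod_cast hn
    rcases lt_or_eq_of_le (hrec n).1.2 with h | h
    · exact h
    · rw [h, hend] at h1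
      nlinarith
  have hstrict : ∀ n, n < k → t n < t (n+1) := by
    intro n hn
    have ha := (hrec n).1
    have hfa : ‖π (t n) - π (t n)‖ < 10 * ρ := by simpa using hρ10
    have hcw : ContinuousWithinAt (fun s => ‖π s - π (t n)‖) (Icc 0 L) (t n) :=
      ((hcont (t n) ha).sub continuousWithinAt_const).norm
    obtain ⟨s, hs1, hs2⟩ := right_pt_aux ha.1 (hltL n hn) hcw hfa
    have hsle := hle (t n) s ⟨hs1.1.le, hs1.2⟩ hs2.le
    rw [← htsucc n] at hsle
    exact lt_of_lt_of_le hs1.1 hsle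
  have hbound : ∀ n, t (n+1) < L → 10 * ρ ≤ ‖π (t (n+1)) - π (t n)‖ := by
    intro n hlt
    by_contra hcon
    push_neg at hcon
    have hb : t (n+1) ∈ Icc 0 L := (hrec (n+1)).1
    have hcw : ContinuousWithinAt (fun s => ‖π s - π (t n)‖) (Icc 0 L) (t (n+1)) :=
      ((hcont _ hb).sub continuousWithinAt_const).norm
    obtain ⟨s, hs1, hs2⟩ := right_pt_aux hb.1 hlt hcw hcon
    have hsle := hle (t n) s ⟨(hmono1 n).trans hs1.1.le, hs1.2⟩ hs2.le
    rw [← htsucc n] at hsle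
    exact absurd hsle (not_le.mpr hs1.1)
  have hsep : ∀ i j, i < j → j ≤ k → 10 * ρ ≤ ‖π (t j) - π (t i)‖ := by
    intro i j hij hjk
    rcases eq_or_lt_of_le (Nat.succ_le_of_lt hij) with h | h
    · -- j = i + 1
      rcases lt_or_eq_of_le (hrec j).1.2 with hjl | hjl
      · rw [← h] at hjl ⊢
        exact hbound i hjl
      · have h1 : ‖π (t j)‖ - ‖π (t i)‖ ≤ ‖π (t j) - π (t i)‖ :=
          norm_sub_norm_le _ _
        have h2 : ‖π (t j)‖ = r := by rw [hjl, hend]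
        have h3 : ‖π (t i)‖ ≤ 10 * ρ * i := (hrec i).2
        have h4 : (i:ℝ) + 1 ≤ (k:ℝ) := by
          have : i + 1 ≤ k := by omega
          exact_mod_cast this
        nlinarith
    · by_contra hcon
      push_neg at hcon
      have hik : i + 1 < k := lt_of_lt_of_le h hjk
      have h1 : t (i+1) < t j :=
        lt_of_lt_of_le (hstrict (i+1) hik) (hmono (i+2) j h)
      have h2 := hle (t i) (t j) ⟨hmono i j hij.le, (hrec j).1.2⟩ hcon.le
      rw [← htsucc i] at h2
      exact absurd h1 (not_lt.mpr h2)
  refine ⟨t, ht0, fun j _ => hmono1 j, fun j _ => (hrec j).1, ?_, ?_⟩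
  · intro j j' hj hj' hne
    rcases hne.lt_or_gt with h | h
    · rw [norm_sub_rev]
      exact hsep j j' h hj'
    · exact hsep j' j h hj
  · intro j hj1 hjk
    have hjj : j - 1 + 1 = j := Nat.succ_pred_eq_of_pos hj1
    have h := hstep (j - 1)
    rw [hjj] at h
    exact h
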